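/- Let q be a prime, let p be a prime not dividing q−1, and let n : ℤ/qℤ → ℕ be a function with n(0) = 0 and Σ_{k ∈ ℤ/qℤ} n(k) = p. If t is a unit of ℤ/qℤ such that n(t·k) = n(k) for all k ∈ ℤ/qℤ, then t = 1. -/

import Mathlib

theorem stmt13 (q p : ℕ) [hq : Fact q.Prime] (hp : p.Prime) (hdvd : ¬ p ∣ (q - 1))
    (n : ZMod q → ℕ) (h0 : n 0 = 0) (hsum : ∑ k, n k = p)
    (t : (ZMod q)ˣ) (ht : ∀ k : ZMod q, n ((t : ZMod q) * k) = n k) :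
    t = 1 := by
  classical
  set H := Subgroup.zpowers t with hH
  -- Step 1: the sum over units equals p.
  have hsum' : ∑ u : (ZMod q)ˣ, n (u : ZMod q) = p := by
    rw [← hsum]
    rw [Fintype.sum_equiv (unitsEquivNeZero (G₀ := ZMod q)) (fun u => n (u : ZMod q))
      (fun a => n a.1) (fun u => rfl)]
    rw [Finset.sum_eq_sum_sdiff_singleton_add (Finset.mem_univ (0 : ZMod q)) n, h0, add_zero]
    symm
    apply Finset.sum_subtype
    intro x
    simp
  -- invariance under powers of t
  have hpow : ∀ (m : ℕ) (k : ZMod q), n (((t ^ m : (ZMod q)ˣ) : ZMod q) * k) = n k := by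
    intro m
    induction m with
    | zero => simp
    | succ m ih =>
      intro k
      rw [pow_succ, Units.val_mul, mul_assoc, ih, ht]
  -- n is constant on cosets of H
  have hconst : ∀ u v : (ZMod q)ˣ, (QuotientGroup.mk u : (ZMod q)ˣ ⧸ H) = QuotientGroup.mk v →
      n (u : ZMod q) = n (v : ZMod q) := by
    intro u v h
    have hmem : u⁻¹ * v ∈ H := QuotientGroup.eq.mp h
    obtain ⟨m, hm⟩ := (Submonoid.mem_powers_iff _ _).mp
      (mem_powers_iff_mem_zpowers.mpr hmem)
    have hv : v = u * t ^ m := by rw [hm]; group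
    rw [hv, Units.val_mul, mul_comm, hpow]
  -- each fiber of the quotient map has cardinality orderOf t
  have hcard : ∀ b : (ZMod q)ˣ ⧸ H,
      Fintype.card {u : (ZMod q)ˣ // (QuotientGroup.mk u : (ZMod q)ˣ ⧸ H) = b} = orderOf t := by
    intro b
    have e : {u : (ZMod q)ˣ // (QuotientGroup.mk u : (ZMod q)ˣ ⧸ H) = b} ≃ H :=
      { toFun := fun u => ⟨b.out⁻¹ * u.1, by
          apply QuotientGroup.eq.mp
          rw [QuotientGroup.out_eq' b, u.2]⟩
        invFun := fun h => ⟨b.out * h.1, by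
          rw [← QuotientGroup.out_eq' b]
          symm
          apply QuotientGroup.eq.mpr
          simpa using h.2⟩
        left_inv := fun u => by simp
        right_inv := fun h => by simp }
    rw [Fintype.card_congr e]
    rw [← Nat.card_eq_fintype_card]
    exact Nat.card_zpowers t
  -- hence orderOf t divides p
  have hdvd' : orderOf t ∣ p := by
    have := Fintype.sum_fiberwise (fun u : (ZMod q)ˣ => (QuotientGroup.mk u : (ZMod q)ˣ ⧸ H))
      (fun u : (ZMod q)ˣ => n (u : ZMod q))
    rw [hsum'] at this
    refine ⟨∑ b : (ZMod q)ˣ ⧸ H, n ((b.out : (ZMod q)ˣ) : ZMod q), ?_⟩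
    rw [← this, Finset.mul_sum]
    refine Finset.sum_congr rfl fun b _ => ?_
    have : ∀ u : {u : (ZMod q)ˣ // (QuotientGroup.mk u : (ZMod q)ˣ ⧸ H) = b},
        n ((u.1 : (ZMod q)ˣ) : ZMod q) = n ((b.out : (ZMod q)ˣ) : ZMod q) := by
      intro u
      exact hconst u.1 b.out (by rw [u.2, QuotientGroup.out_eq' b])
    rw [Finset.sum_congr rfl (fun u _ => this u), Finset.sum_const, smul_eq_mul,
      Finset.card_univ, hcard b]
  -- orderOf t divides q - 1
  have hdvd'' : orderOf t ∣ q - 1 := by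
    rw [← ZMod.card_units q]
    exact orderOf_dvd_card
  rcases (Nat.Prime.eq_one_or_self_of_dvd hp _ hdvd') with h1 | h1
  · exact orderOf_eq_one_iff.mp h1
  · exact absurd (h1 ▸ hdvd'') hdvd
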